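/- Let K ⊆ ℝⁿ be a proper self-dual cone (K = K*) and A ∈ ℝ^{n×n} a symmetric matrix. Assume that ⟨Ax, y⟩ ≤ ⟨x, y⟩ · max{⟨Ax, x⟩, ⟨Ay, y⟩} for all unit vectors x, y ∈ K (the paper's characterization of q_A(x) = ⟨Ax, x⟩ being spherically quasi-convex). Then A has the K-Z-property: ⟨Ax, y⟩ ≤ 0 for all x ∈ K and y ∈ K with ⟨x, y⟩ = 0. -/
import Mathlib


open scoped RealInnerProductSpace

/-- The quadratic form `x ↦ ⟨A x, x⟩` associated with a matrix `A`. -/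
noncomputable def quadForm {n : ℕ} (A : Matrix (Fin n) (Fin n) ℝ)
    (x : EuclideanSpace ℝ (Fin n)) : ℝ :=
  ⟪Matrix.toEuclideanLin A x, x⟫

/-- `K` is a cone: closed under multiplication by positive scalars. -/
def IsCone {n : ℕ} (K : Set (EuclideanSpace ℝ (Fin n))) : Prop :=
  ∀ ⦃t : ℝ⦄, 0 < t → ∀ ⦃x⦄, x ∈ K → t • x ∈ K

/-- A proper cone: a pointed closed convex cone with nonempty interior. -/
def IsProperCone {n : ℕ} (K : Set (EuclideanSpace ℝ (Fin n))) : Prop :=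
  IsCone K ∧ Convex ℝ K ∧ IsClosed K ∧ K ∩ (-K) ⊆ {0} ∧ (interior K).Nonempty

/-- The dual cone `K* = {u : ⟨u, y⟩ ≥ 0 for all y ∈ K}`. -/
def dualCone {n : ℕ} (K : Set (EuclideanSpace ℝ (Fin n))) : Set (EuclideanSpace ℝ (Fin n)) :=
  {u | ∀ y ∈ K, 0 ≤ ⟪u, y⟫}

/-- The sublevel set `[φ_A ≤ c] = {x ∈ int K : ⟨A x, x⟩ ≤ c ‖x‖²}`. -/
noncomputable def sublevel {n : ℕ} (A : Matrix (Fin n) (Fin n) ℝ)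
    (K : Set (EuclideanSpace ℝ (Fin n))) (c : ℝ) : Set (EuclideanSpace ℝ (Fin n)) :=
  {x ∈ interior K | quadForm A x ≤ c * ‖x‖ ^ 2}

/-- If `K` is a proper self-dual cone and `q_A` satisfies the spherical quasi-convexity
characterization (b), then `A` has the `K`-Z-property. -/
theorem stmt4 (n : ℕ) (K : Set (EuclideanSpace ℝ (Fin n)))
    (hK : IsProperCone K) (hself : dualCone K = K)
    (A : Matrix (Fin n) (Fin n) ℝ) (hA : A.IsSymm)
    (hyp : ∀ x ∈ K, ∀ y ∈ K, ‖x‖ = 1 → ‖y‖ = 1 →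
      ⟪Matrix.toEuclideanLin A x, y⟫ ≤ ⟪x, y⟫ * max (quadForm A x) (quadForm A y)) :
    ∀ x ∈ K, ∀ y ∈ K, ⟪x, y⟫ = 0 → ⟪Matrix.toEuclideanLin A x, y⟫ ≤ 0 := by
  intro x hx y hy hxy
  rcases eq_or_ne x 0 with rfl | hx0
  · simp
  rcases eq_or_ne y 0 with rfl | hy0
  · simp
  have hnx : (0:ℝ) < ‖x‖ := norm_pos_iff.mpr hx0
  have hny : (0:ℝ) < ‖y‖ := norm_pos_iff.mpr hy0
  set x' := (‖x‖⁻¹) • x with hx'def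
  set y' := (‖y‖⁻¹) • y with hy'def
  have hx' : x' ∈ K := hK.1 (inv_pos.mpr hnx) hx
  have hy' : y' ∈ K := hK.1 (inv_pos.mpr hny) hy
  have hnx' : ‖x'‖ = 1 := by
    rw [hx'def, norm_smul, norm_inv, norm_norm, inv_mul_cancel₀ hnx.ne']
  have hny' : ‖y'‖ = 1 := by
    rw [hy'def, norm_smul, norm_inv, norm_norm, inv_mul_cancel₀ hny.ne']
  have h := hyp x' hx' y' hy' hnx' hny'
  have hxy' : ⟪x', y'⟫ = 0 := by
    rw [hx'def, hy'def, real_inner_smul_left, real_inner_smul_right, hxy]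
    ring
  rw [hxy', zero_mul] at h
  have key : ⟪Matrix.toEuclideanLin A x', y'⟫ = ‖x‖⁻¹ * ‖y‖⁻¹ * ⟪Matrix.toEuclideanLin A x, y⟫ := by
    rw [hx'def, hy'def, map_smul, real_inner_smul_left, real_inner_smul_right]
    ring
  rw [key] at h
  have := mul_nonneg hnx.le hny.le
  nlinarith [mul_pos (inv_pos.mpr hnx) (inv_pos.mpr hny)]
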